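/- Fix p, q ∈ ℝ³. Regard h as a function of the symmetric positive definite 3×3 matrix A via h(A) = √(2 p⁰_A q⁰_A − 2 − 2 pᵀAq), where p⁰_A = √(1+pᵀAp), q⁰_A = √(1+qᵀAq). Then at every symmetric positive definite A with h(A) > 0, h is differentiable, and for every symmetric 3×3 matrix B the directional derivative equals Dh(A)[B] = (p⁰_A q⁰_A / (2h(A))) · uᵀBu, where u = p/p⁰_A − q/q⁰_A ∈ ℝ³. Consequently there is an absolute constant C such that for every orthonormal frame E for A, |Dh(A)[B]| ≤ C ‖e⁻¹‖² h(A) (p⁰_A q⁰_A)² max_{a,b}|B_{ab}|. -/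

import Mathlib

open Matrix Real

noncomputable section

/-- 3×3 real matrices. -/
abbrev Mat3 := Matrix (Fin 3) (Fin 3) ℝ
/-- Momentum vectors in ℝ³. -/
abbrev V3 := Fin 3 → ℝ

/-- The quadratic form `pᵀ A p`. -/
def quadG (A : Mat3) (p : V3) : ℝ := p ⬝ᵥ A *ᵥ p

/-- The energy `p⁰_A = √(1 + pᵀ A p)`. -/
def p0 (A : Mat3) (p : V3) : ℝ := Real.sqrt (1 + quadG A p)

/-- The relative momentum as a function of the matrix:
`h(A) = √(2 p⁰_A q⁰_A − 2 − 2 pᵀAq)`. -/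
def hm (p q : V3) (A : Mat3) : ℝ :=
  Real.sqrt (2 * p0 A p * p0 A q - 2 - 2 * (p ⬝ᵥ A *ᵥ q))

/-- The maximum of the absolute values of the entries of a matrix. -/
def entryNorm (M : Mat3) : ℝ := ⨆ i, ⨆ j, |M i j|

/- ### Auxiliary lemmas -/

lemma quad_nonneg {A : Mat3} (hA : A.PosDef) (p : V3) : 0 ≤ quadG A p := by
  simpa [quadG] using hA.posSemidef.dotProduct_mulVec_nonneg p

lemma dot_lin (A B : Mat3) (t : ℝ) (p q : V3) :
    p ⬝ᵥ (A + t • B) *ᵥ q = p ⬝ᵥ A *ᵥ q + t * (p ⬝ᵥ B *ᵥ q) := by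
  simp [add_mulVec, smul_mulVec, dotProduct_add, dotProduct_smul, smul_eq_mul]

lemma dot_symm {B : Mat3} (hB : B.IsSymm) (p q : V3) :
    q ⬝ᵥ B *ᵥ p = p ⬝ᵥ B *ᵥ q := by
  rw [dotProduct_mulVec]; nth_rewrite 1 [← Matrix.IsSymm.eq hB]
  rw [vecMul_transpose, dotProduct_comm]

lemma quad_expand (M : Mat3) (x y : V3) (s t : ℝ) :
    quadG M (fun i => x i / s - y i / t) =
      quadG M x / s^2 - (x ⬝ᵥ M *ᵥ y)/(s*t) - (y ⬝ᵥ M *ᵥ x)/(s*t) + quadG M y / t^2 := by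
  simp only [quadG, dotProduct, mulVec, Fin.sum_univ_three]
  ring

lemma key (a b c d e g : ℝ) (ha : 0 ≤ a) (hc : 0 ≤ c)
    (hpos : 0 < Real.sqrt (2 * Real.sqrt (1+a) * Real.sqrt (1+c) - 2 - 2*e)) :
    HasDerivAt (fun t : ℝ =>
        Real.sqrt (2 * Real.sqrt (1+a+t*b) * Real.sqrt (1+c+t*d) - 2 - 2*(e+t*g)))
      ((Real.sqrt (1+c)/Real.sqrt (1+a) * b + Real.sqrt (1+a)/Real.sqrt (1+c) * d - 2*g) /
        (2 * Real.sqrt (2 * Real.sqrt (1+a) * Real.sqrt (1+c) - 2 - 2*e))) 0 := by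
  have hA : (0:ℝ) < 1 + a := by linarith
  have hC : (0:ℝ) < 1 + c := by linarith
  set P := Real.sqrt (1+a) with hP
  set Q := Real.sqrt (1+c) with hQ
  have hPpos : 0 < P := Real.sqrt_pos.mpr hA
  have hQpos : 0 < Q := Real.sqrt_pos.mpr hC
  have hf0 : 0 < 2 * P * Q - 2 - 2*e := Real.sqrt_pos.mp hpos
  have h1 : HasDerivAt (fun t : ℝ => 1 + a + t * b) b 0 := by
    simpa using (hasDerivAt_mul_const b).const_add (1 + a)
  have h1' : HasDerivAt (fun t : ℝ => 1 + c + t * d) d 0 := by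
    simpa using (hasDerivAt_mul_const d).const_add (1 + c)
  have h2 : HasDerivAt (fun t : ℝ => Real.sqrt (1 + a + t * b)) (1/(2*P) * b) 0 := by
    have := (Real.hasDerivAt_sqrt (x := 1 + a + 0 * b) (by simpa using hA.ne')).comp 0 h1
    simpa [Function.comp_def] using this
  have h2' : HasDerivAt (fun t : ℝ => Real.sqrt (1 + c + t * d)) (1/(2*Q) * d) 0 := by
    have := (Real.hasDerivAt_sqrt (x := 1 + c + 0 * d) (by simpa using hC.ne')).comp 0 h1'
    simpa [Function.comp_def] using this
  have h3 : HasDerivAt (fun t : ℝ =>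
      2 * Real.sqrt (1+a+t*b) * Real.sqrt (1+c+t*d) - 2 - 2*(e+t*g))
      (2 * ((1/(2*P) * b) * Q + P * (1/(2*Q) * d)) - 2 * g) 0 := by
    have hmul := ((h2.const_mul 2).mul h2')
    have hlin : HasDerivAt (fun t : ℝ => 2 * (e + t * g)) (2 * g) 0 := by
      simpa using ((hasDerivAt_mul_const g).const_add e).const_mul 2
    have := (hmul.sub_const 2).sub hlin
    exact this.congr_deriv (by simp [hP, hQ]; ring)
  have hne : 2 * P * Q - 2 - 2*e ≠ 0 := hf0.ne'
  have h4 := (Real.hasDerivAt_sqrt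
    (x := 2 * Real.sqrt (1+a+0*b) * Real.sqrt (1+c+0*d) - 2 - 2*(e+0*g))
    (by simpa using hne)).comp 0 h3
  have hs : Real.sqrt (2 * Real.sqrt (1 + a + 0 * b) * Real.sqrt (1 + c + 0 * d)
      - 2 - 2 * (e + 0 * g)) = Real.sqrt (2*P*Q - 2 - 2*e) := by norm_num [hP, hQ]
  rw [hs] at h4
  have hs2 : 0 < Real.sqrt (2*P*Q - 2 - 2*e) := hpos
  exact h4.congr_deriv (by field_simp)

lemma entry_le (M : Mat3) (i j : Fin 3) : |M i j| ≤ entryNorm M :=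
  le_trans (le_ciSup (f := fun j => |M i j|) (Set.Finite.bddAbove (Set.finite_range _)) j)
    (le_ciSup (f := fun i => ⨆ j, |M i j|) (Set.Finite.bddAbove (Set.finite_range _)) i)

lemma entryNorm_nonneg (M : Mat3) : 0 ≤ entryNorm M :=
  le_trans (abs_nonneg _) (entry_le M 0 0)

lemma quad_abs_le (B : Mat3) (u : V3) (U : ℝ) (hU : ∀ i, |u i| ≤ U) :
    |quadG B u| ≤ 9 * U^2 * entryNorm B := by
  have hUnn : 0 ≤ U := le_trans (abs_nonneg _) (hU 0)
  have hNB := entryNorm_nonneg B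
  have hexp : quadG B u = ∑ i : Fin 3, ∑ j : Fin 3, u i * (B i j * u j) := by
    simp [quadG, dotProduct, mulVec, Finset.mul_sum]
  rw [hexp]
  calc |∑ i : Fin 3, ∑ j : Fin 3, u i * (B i j * u j)|
      ≤ ∑ i : Fin 3, |∑ j : Fin 3, u i * (B i j * u j)| := Finset.abs_sum_le_sum_abs _ _
    _ ≤ ∑ i : Fin 3, ∑ j : Fin 3, |u i * (B i j * u j)| :=
        Finset.sum_le_sum fun i _ => Finset.abs_sum_le_sum_abs _ _
    _ ≤ ∑ _i : Fin 3, ∑ _j : Fin 3, U * (entryNorm B * U) := by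
        refine Finset.sum_le_sum fun i _ => Finset.sum_le_sum fun j _ => ?_
        rw [abs_mul, abs_mul]
        exact mul_le_mul (hU i)
          (mul_le_mul (entry_le B i j) (hU j) (abs_nonneg _) hNB)
          (by positivity) hUnn
    _ = 9 * U^2 * entryNorm B := by simp [Finset.sum_const]; ring

set_option maxHeartbeats 2000000 in
/-- at every symmetric positive definite `A` with `h(A) > 0`, the map
`A ↦ h(A)` has, in every symmetric direction `B`, directional derivative
`Dh(A)[B] = (p⁰_A q⁰_A/(2h(A))) uᵀBu` where `u = p/p⁰_A − q/q⁰_A`, and there is an absolute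
constant `C` such that for every orthonormal frame `E` for `A` (`E A Eᵀ = 1`),
`|Dh(A)[B]| ≤ C ‖e⁻¹‖² h(A) (p⁰_A q⁰_A)² max_{a,b}|B_{ab}|`. -/
theorem stmt9 :
    ∃ C > (0 : ℝ), ∀ (p q : V3) (A : Mat3), A.PosDef → 0 < hm p q A →
      ∀ B : Mat3, B.IsSymm →
        HasDerivAt (fun t : ℝ => hm p q (A + t • B))
          (p0 A p * p0 A q / (2 * hm p q A) *
            quadG B (fun i => p i / p0 A p - q i / p0 A q)) 0 ∧
        ∀ E : Mat3, E * A * Eᵀ = 1 →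
          |p0 A p * p0 A q / (2 * hm p q A) *
              quadG B (fun i => p i / p0 A p - q i / p0 A q)|
            ≤ C * entryNorm E ^ 2 * hm p q A * (p0 A p * p0 A q) ^ 2 * entryNorm B := by
  refine ⟨81, by norm_num, fun p q A hA hh B hB => ?_⟩
  have hAsymm : A.IsSymm := by
    have := hA.1
    rwa [Matrix.IsHermitian, Matrix.conjTranspose_eq_transpose_of_trivial] at this
  set a := quadG A p with ha_def
  set c := quadG A q with hc_def
  set b := quadG B p with hb_def
  set d := quadG B q with hd_def
  set e := p ⬝ᵥ A *ᵥ q with he_def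
  set g := p ⬝ᵥ B *ᵥ q with hg_def
  have ha : 0 ≤ a := quad_nonneg hA p
  have hc : 0 ≤ c := quad_nonneg hA q
  have hA1 : (0:ℝ) < 1 + a := by linarith
  have hC1 : (0:ℝ) < 1 + c := by linarith
  set P := p0 A p with hP_def
  set Q := p0 A q with hQ_def
  have hP : P = Real.sqrt (1 + a) := rfl
  have hQ : Q = Real.sqrt (1 + c) := rfl
  have hP1 : 1 ≤ P := by
    rw [hP]
    have := Real.sqrt_le_sqrt (show (1:ℝ) ≤ 1 + a by linarith)
    simpa using this
  have hQ1 : 1 ≤ Q := by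
    rw [hQ]
    have := Real.sqrt_le_sqrt (show (1:ℝ) ≤ 1 + c by linarith)
    simpa using this
  have hPpos : 0 < P := lt_of_lt_of_le one_pos hP1
  have hQpos : 0 < Q := lt_of_lt_of_le one_pos hQ1
  have hP2 : P^2 = 1 + a := by rw [hP]; exact Real.sq_sqrt hA1.le
  have hQ2 : Q^2 = 1 + c := by rw [hQ]; exact Real.sq_sqrt hC1.le
  set h := hm p q A with hh_def
  have hhm : h = Real.sqrt (2 * P * Q - 2 - 2 * e) := rfl
  have hf0 : 0 < 2 * P * Q - 2 - 2 * e := Real.sqrt_pos.mp (hhm ▸ hh)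
  have hh2 : h^2 = 2 * P * Q - 2 - 2 * e := by rw [hhm]; exact Real.sq_sqrt hf0.le
  -- the quadratic form expansion in direction B
  have hu : quadG B (fun i => p i / P - q i / Q) = b/P^2 - 2*g/(P*Q) + d/Q^2 := by
    rw [quad_expand, dot_symm hB p q, ← hb_def, ← hd_def, ← hg_def]
    ring
  -- the derivative
  have hfun : (fun t : ℝ => hm p q (A + t • B)) = fun t : ℝ =>
      Real.sqrt (2 * Real.sqrt (1+a+t*b) * Real.sqrt (1+c+t*d) - 2 - 2*(e+t*g)) := by
    funext t
    simp only [hm, p0, quadG, ha_def, hb_def, hc_def, hd_def, he_def, hg_def, dot_lin]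
    ring_nf
  have hderiv : HasDerivAt (fun t : ℝ => hm p q (A + t • B))
      ((Q/P * b + P/Q * d - 2*g) / (2*h)) 0 := by
    rw [hfun]
    have := key a b c d e g ha hc (by rw [← hP, ← hQ, ← hhm]; exact hh)
    rw [← hP, ← hQ, ← hhm] at this
    exact this
  constructor
  · convert hderiv using 1
    rw [hu]
    field_simp
    ring
  · intro E hE
    -- w := (E * A) *ᵥ u satisfies Eᵀ *ᵥ w = u and w ⬝ᵥ w = quadG A u
    set u : V3 := fun i => p i / P - q i / Q with hu_def
    set w : V3 := (E * A) *ᵥ u with hw_def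
    have hinv : Eᵀ * (E * A) = 1 := by
      have h1 : A * Eᵀ * E = 1 := by
        rw [← mul_eq_one_comm]
        calc E * (A * Eᵀ) = E * A * Eᵀ := by rw [Matrix.mul_assoc]
          _ = 1 := hE
      have := congrArg Matrix.transpose h1
      simpa [Matrix.transpose_mul, Matrix.mul_assoc, hAsymm.eq] using this
    have hw1 : Eᵀ *ᵥ w = u := by
      rw [hw_def, mulVec_mulVec, hinv, one_mulVec]
    have hw2 : w ⬝ᵥ w = quadG A u := by
      have hMM : (E * A)ᵀ * (E * A) = A := by
        rw [Matrix.transpose_mul, hAsymm.eq, Matrix.mul_assoc, hinv, Matrix.mul_one]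
      symm
      calc quadG A u = u ⬝ᵥ ((E*A)ᵀ * (E*A)) *ᵥ u := by rw [hMM]; rfl
        _ = u ⬝ᵥ (E*A)ᵀ *ᵥ ((E*A) *ᵥ u) := by rw [mulVec_mulVec]
        _ = (u ᵥ* (E*A)ᵀ) ⬝ᵥ ((E*A) *ᵥ u) := by rw [dotProduct_mulVec]
        _ = w ⬝ᵥ w := by rw [vecMul_transpose, ← hw_def]
    have hqAu : 0 ≤ quadG A u := quad_nonneg hA u
    set W := Real.sqrt (quadG A u) with hW_def
    have hWnn : 0 ≤ W := Real.sqrt_nonneg _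
    have hW2 : W^2 = quadG A u := Real.sq_sqrt hqAu
    have hwj : ∀ j, |w j| ≤ W := by
      intro j
      apply Real.abs_le_sqrt
      have h5 : w j * w j ≤ ∑ k : Fin 3, w k * w k :=
        Finset.single_le_sum (f := fun k => w k * w k)
          (fun k _ => mul_self_nonneg (w k)) (Finset.mem_univ j)
      have h6 : w ⬝ᵥ w = ∑ k : Fin 3, w k * w k := rfl
      rw [← hw2, h6, pow_two]
      exact h5
    have hNE := entryNorm_nonneg E
    have hNB := entryNorm_nonneg B
    have hui : ∀ i, |u i| ≤ 3 * entryNorm E * W := by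
      intro i
      have : u i = ∑ j : Fin 3, E j i * w j := by
        rw [← hw1]; simp [mulVec, dotProduct, transpose]
      rw [this]
      calc |∑ j : Fin 3, E j i * w j| ≤ ∑ j : Fin 3, |E j i * w j| :=
            Finset.abs_sum_le_sum_abs _ _
        _ ≤ ∑ _j : Fin 3, entryNorm E * W := by
            refine Finset.sum_le_sum fun j _ => ?_
            rw [abs_mul]
            exact mul_le_mul (entry_le E j i) (hwj j) (abs_nonneg _) hNE
        _ = 3 * entryNorm E * W := by simp [Finset.sum_const]; ring
    -- |quadG B u| ≤ 81 NE² W² NB and W² ≤ h²/(PQ)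
    have hq1 : |quadG B u| ≤ 9 * (3 * entryNorm E * W)^2 * entryNorm B :=
      quad_abs_le B u _ hui
    have hAu : quadG A u ≤ h^2 / (P*Q) := by
      have hexpand : quadG A u = a/P^2 - 2*e/(P*Q) + c/Q^2 := by
        rw [hu_def, quad_expand, dot_symm hAsymm p q, ← ha_def, ← hc_def, ← he_def]
        ring
      have ha' : a = P^2 - 1 := by linarith [hP2]
      have hc' : c = Q^2 - 1 := by linarith [hQ2]
      have : quadG A u = h^2/(P*Q) - (1/P - 1/Q)^2 := by
        rw [hexpand, hh2, ha', hc']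
        field_simp
        ring
      rw [this]
      exact sub_le_self _ (sq_nonneg _)
    have hq2 : |quadG B u| ≤ 81 * entryNorm E^2 * (h^2/(P*Q)) * entryNorm B := by
      calc |quadG B u| ≤ 9 * (3 * entryNorm E * W)^2 * entryNorm B := hq1
        _ = 81 * entryNorm E^2 * W^2 * entryNorm B := by ring
        _ ≤ 81 * entryNorm E^2 * (h^2/(P*Q)) * entryNorm B := by
            have hW2' : W^2 ≤ h^2/(P*Q) := by rw [hW2]; exact hAu
            have hc1 : (0:ℝ) ≤ 81 * entryNorm E^2 := by positivity
            have := mul_le_mul_of_nonneg_right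
              (mul_le_mul_of_nonneg_left hW2' hc1) hNB
            calc 81 * entryNorm E^2 * W^2 * entryNorm B
                = 81 * entryNorm E^2 * W^2 * entryNorm B := rfl
              _ ≤ 81 * entryNorm E^2 * (h^2/(P*Q)) * entryNorm B := this
    clear_value a c b d e g P Q h u w W
    have hcoef : 0 ≤ P * Q / (2 * h) :=
      div_nonneg (mul_nonneg hPpos.le hQpos.le) (by linarith)
    calc |P * Q / (2 * h) * quadG B u| = P * Q / (2 * h) * |quadG B u| := by
          rw [abs_mul, abs_of_nonneg hcoef]
      _ ≤ P * Q / (2 * h) * (81 * entryNorm E^2 * (h^2/(P*Q)) * entryNorm B) :=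
          mul_le_mul_of_nonneg_left hq2 hcoef
      _ = 81/2 * entryNorm E^2 * h * entryNorm B := by field_simp
      _ ≤ 81 * entryNorm E^2 * h * (P * Q)^2 * entryNorm B := by
          have hPQ1 : (1:ℝ) ≤ (P*Q)^2 := by nlinarith [hP1, hQ1]
          have ht : 0 ≤ entryNorm E^2 * h * entryNorm B :=
            mul_nonneg (mul_nonneg (sq_nonneg _) hh.le) hNB
          nlinarith [mul_le_mul_of_nonneg_right hPQ1 ht]
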